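/- Let Γ = (Γ₁, Γ₂) : ℝ → ℝ² be continuously differentiable. Define on ℝ³ the Heisenberg group product (x₁,y₁,z₁)·(x₂,y₂,z₂) := (x₁+x₂, y₁+y₂, z₁+z₂+½(x₂y₁ − x₁y₂)), and the lifted path g(t) := (Γ₁(t) − Γ₁(0), Γ₂(t) − Γ₂(0), ½·LA(0,t)). Then for all real s, t one has g(s) · (Γ₁(t) − Γ₁(s), Γ₂(t) − Γ₂(s), ½·LA(s,t)) = g(t); in other words, the defect of additivity of the Lévy area is encoded by the non-commutativity of the Heisenberg group product. -/

import Mathlib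

open MeasureTheory intervalIntegral

/-- The Lévy area of a C¹ path `(Γ₁, Γ₂)` between times `s` and `t`. -/
noncomputable def levyArea (Γ₁ Γ₂ : ℝ → ℝ) (s t : ℝ) : ℝ :=
  (∫ u in s..t, deriv Γ₁ u * (Γ₂ u - Γ₂ s)) -
    (∫ u in s..t, deriv Γ₂ u * (Γ₁ u - Γ₁ s))

/-- The Heisenberg group product on ℝ³ in exponential coordinates:
`(x₁,y₁,z₁)·(x₂,y₂,z₂) = (x₁+x₂, y₁+y₂, z₁+z₂+½(x₂y₁ − x₁y₂))`. -/
noncomputable def heisMul (a b : ℝ × ℝ × ℝ) : ℝ × ℝ × ℝ :=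
  (a.1 + b.1, a.2.1 + b.2.1, a.2.2 + b.2.2 + (b.1 * a.2.1 - a.1 * b.2.1) / 2)

/-- The lifted path `g(t) = (Γ₁(t) − Γ₁(0), Γ₂(t) − Γ₂(0), ½·LA(0,t))`. -/
noncomputable def heisLift (Γ₁ Γ₂ : ℝ → ℝ) (t : ℝ) : ℝ × ℝ × ℝ :=
  (Γ₁ t - Γ₁ 0, Γ₂ t - Γ₂ 0, levyArea Γ₁ Γ₂ 0 t / 2)

private lemma chen_aux (f g : ℝ → ℝ) (hf : ContDiff ℝ 1 f) (hg : ContDiff ℝ 1 g) (s t : ℝ) :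
    (∫ u in (0:ℝ)..t, deriv f u * (g u - g 0)) =
      (∫ u in (0:ℝ)..s, deriv f u * (g u - g 0)) +
        ((∫ u in s..t, deriv f u * (g u - g s)) + (g s - g 0) * (f t - f s)) := by
  have hf' : Continuous (deriv f) := (hf.iterate_deriv' 0 1).continuous
  have hgc : Continuous g := hg.continuous
  have hint : ∀ (a b c : ℝ), IntervalIntegrable (fun u => deriv f u * (g u - g c)) volume a b :=
    fun a b c => ((hf'.mul (hgc.sub continuous_const)).intervalIntegrable a b)
  have hsplit : (∫ u in (0:ℝ)..t, deriv f u * (g u - g 0)) =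
      (∫ u in (0:ℝ)..s, deriv f u * (g u - g 0)) +
        (∫ u in s..t, deriv f u * (g u - g 0)) :=
    (intervalIntegral.integral_add_adjacent_intervals (hint 0 s 0) (hint s t 0)).symm
  have hftc : (∫ u in s..t, deriv f u) = f t - f s := by
    apply intervalIntegral.integral_deriv_eq_sub
    · intro x _; exact (hf.differentiable one_ne_zero).differentiableAt
    · exact hf'.intervalIntegrable s t
  have h2 : (∫ u in s..t, deriv f u * (g u - g 0)) =
      (∫ u in s..t, deriv f u * (g u - g s)) + (g s - g 0) * (f t - f s) := by
    have : ∀ u, deriv f u * (g u - g 0) =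
        deriv f u * (g u - g s) + (g s - g 0) * deriv f u := by intro u; ring
    rw [intervalIntegral.integral_congr (fun u _ => this u),
      intervalIntegral.integral_add (hint s t s)
        (by have hc : Continuous (fun u => (g s - g 0) * deriv f u) := continuous_const.mul hf'; exact hc.intervalIntegrable s t),
      intervalIntegral.integral_const_mul, hftc]
  rw [hsplit, h2]

/-- The defect of additivity of the Lévy area is encoded by the Heisenberg group product:
`g(s) · (Γ₁(t) − Γ₁(s), Γ₂(t) − Γ₂(s), ½·LA(s,t)) = g(t)`. -/
theorem levyArea_heisenberg (Γ₁ Γ₂ : ℝ → ℝ)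
    (h₁ : ContDiff ℝ 1 Γ₁) (h₂ : ContDiff ℝ 1 Γ₂) (s t : ℝ) :
    heisMul (heisLift Γ₁ Γ₂ s)
        (Γ₁ t - Γ₁ s, Γ₂ t - Γ₂ s, levyArea Γ₁ Γ₂ s t / 2)
      = heisLift Γ₁ Γ₂ t := by
  simp only [heisMul, heisLift, levyArea, Prod.mk.injEq]
  refine ⟨by ring, by ring, ?_⟩
  rw [chen_aux Γ₁ Γ₂ h₁ h₂ s t, chen_aux Γ₂ Γ₁ h₂ h₁ s t]
  ring
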